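/- Let V be a finite-dimensional real vector space, let μ₁ and μ₂ be inner products (positive definite symmetric bilinear forms) on V, and let Φ be a finite set of increasing filtrations of V. Assume that for each j ∈ {1,2} the family consisting of the μ_j-orthogonal splittings of the filtrations in Φ is compatible. Then there exists a linear automorphism g of V preserving every filtration in Φ (i.e. g(W_k) = W_k for every W ∈ Φ and every k ∈ ℤ) such that μ₂(x,y) = μ₁(g⁻¹x, g⁻¹y) for all x, y ∈ V. -/

import Mathlib

/-- An *increasing filtration* of a real vector space `V`: a monotone family of
subspaces indexed by `ℤ` which is `⊥` for all sufficiently small indices and `⊤`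
for all sufficiently large indices. -/
def IsIncFiltration {V : Type*} [AddCommGroup V] [Module ℝ V]
    (W : ℤ → Submodule ℝ V) : Prop :=
  Monotone W ∧ (∃ a : ℤ, ∀ k : ℤ, k ≤ a → W k = ⊥) ∧ (∃ b : ℤ, ∀ k : ℤ, b ≤ k → W k = ⊤)

/-- The `μ`-orthogonal splitting of an increasing filtration `W`:
`s_W(k) = W_k ⊓ (W_{k-1})^{⊥_μ}`. -/
def orthSplit {V : Type*} [AddCommGroup V] [Module ℝ V]
    (μ : LinearMap.BilinForm ℝ V) (W : ℤ → Submodule ℝ V) (k : ℤ) : Submodule ℝ V :=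
  W k ⊓ μ.orthogonal (W (k - 1))

/-- A family of splittings `s i` (of filtrations indexed by `i : ι`) is *compatible*
if there is a direct sum decomposition `V = ⊕_{w ∈ ℤ^ι} V[w]`, with only finitely many
nonzero summands, such that `s i k = ⊕_{w : w i = k} V[w]` for every `i` and `k`. -/
def CompatibleFamily {V : Type*} [AddCommGroup V] [Module ℝ V] {ι : Type*}
    (s : ι → ℤ → Submodule ℝ V) : Prop :=
  ∃ D : (ι → ℤ) → Submodule ℝ V,
    iSupIndep D ∧ iSup D = ⊤ ∧ {w : ι → ℤ | D w ≠ ⊥}.Finite ∧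
    ∀ (i : ι) (k : ℤ), s i k = ⨆ w ∈ {w : ι → ℤ | w i = k}, D w

open DirectSum Module LinearMap

section auxLemmas
variable {V : Type*} [AddCommGroup V] [Module ℝ V]

/-- component vanishing for members of a partial sup -/
lemma internal_comp_eq_zero {ι : Type*} [DecidableEq ι] {D : ι → Submodule ℝ V}
    (h : DirectSum.IsInternal D) {A : Set ι} {x : V} (hx : x ∈ ⨆ w ∈ A, D w)
    {w : ι} (hw : w ∉ A) :
    (LinearEquiv.ofBijective (DirectSum.coeLinearMap D) h).symm x w = 0 := by
  set E := LinearEquiv.ofBijective (DirectSum.coeLinearMap D) h with hE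
  have hle : (⨆ w' ∈ A, D w') ≤ LinearMap.ker
      ((DirectSum.component ℝ ι (fun w => D w) w).comp E.symm.toLinearMap) := by
    refine iSup₂_le fun w' hw' => fun y hy => ?_
    simp only [LinearMap.mem_ker, LinearMap.comp_apply, LinearEquiv.coe_coe]
    have : E.symm y w = 0 := h.ofBijective_coeLinearMap_of_mem_ne
      (by rintro rfl; exact hw hw') hy
    exact this
  have := hle hx
  exact this

lemma mem_biSup_of_supp {ι : Type*} [DecidableEq ι] {D : ι → Submodule ℝ V}
    (h : DirectSum.IsInternal D) {A : Set ι} {x : V}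
    (hx : ∀ w, w ∉ A → (LinearEquiv.ofBijective (DirectSum.coeLinearMap D) h).symm x w = 0) :
    x ∈ ⨆ w ∈ A, D w := by
  classical
  set E := LinearEquiv.ofBijective (DirectSum.coeLinearMap D) h with hE
  have hx' : x = DirectSum.coeLinearMap D (E.symm x) := (E.apply_symm_apply x).symm
  rw [hx', ← DirectSum.sum_support_of (E.symm x), map_sum]
  apply Submodule.sum_mem
  intro w hw
  rw [DirectSum.coeLinearMap_of]
  have hwA : w ∈ A := by
    by_contra hc
    exact (DFinsupp.mem_support_iff.mp hw) (hx w hc)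
  exact Submodule.mem_iSup_of_mem w (Submodule.mem_iSup_of_mem hwA ((E.symm x w).2))

lemma iInf_biSup_eq {ι ι₂ : Type*} [DecidableEq ι] {D : ι → Submodule ℝ V}
    (h : DirectSum.IsInternal D) (A : ι₂ → Set ι) :
    (⨅ i, ⨆ w ∈ A i, D w) = ⨆ w ∈ ⋂ i, A i, D w := by
  ext x
  simp only [Submodule.mem_iInf]
  constructor
  · intro hx
    apply mem_biSup_of_supp h
    intro w hw
    rw [Set.mem_iInter] at hw
    push_neg at hw
    obtain ⟨i, hi⟩ := hw
    exact internal_comp_eq_zero h (hx i) hi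
  · intro hx i
    apply mem_biSup_of_supp h
    intro w hw
    exact internal_comp_eq_zero h hx (fun hc => hw (Set.mem_iInter.mp hc i))

lemma posdef_symm_isRefl (μ : LinearMap.BilinForm ℝ V) (hsymm : ∀ x y : V, μ x y = μ y x) :
    μ.IsRefl := fun x y h => by rw [hsymm]; exact h

lemma posdef_restrict_nondegenerate [FiniteDimensional ℝ V] (μ : LinearMap.BilinForm ℝ V)
    (hpos : ∀ x : V, x ≠ 0 → 0 < μ x x) (U : Submodule ℝ V) :
    (μ.restrict U).Nondegenerate := by
  constructor <;> intro x hx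
  all_goals
    by_contra hne
    have h0 : μ (x : V) (x : V) = 0 := by simpa using hx x
    exact (hpos x (fun h => hne (Subtype.ext h))).ne' h0

/-- one step of the orthogonal splitting -/
lemma filt_step [FiniteDimensional ℝ V] (μ : LinearMap.BilinForm ℝ V)
    (hsymm : ∀ x y : V, μ x y = μ y x) (hpos : ∀ x : V, x ≠ 0 → 0 < μ x x)
    {W : ℤ → Submodule ℝ V} (hmono : Monotone W) (k : ℤ) :
    W k ≤ W (k - 1) ⊔ orthSplit μ W k := by
  have hc : IsCompl (W (k-1)) (μ.orthogonal (W (k-1))) :=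
    LinearMap.BilinForm.isCompl_orthogonal_of_restrict_nondegenerate
      (posdef_symm_isRefl μ hsymm) (posdef_restrict_nondegenerate μ hpos _)
  have hle : W (k-1) ≤ W k := hmono (by omega)
  have := sup_inf_assoc_of_le (μ.orthogonal (W (k-1))) hle
  rw [hc.sup_eq_top, top_inf_eq] at this
  rw [orthSplit, inf_comm]
  exact this.le

lemma filt_eq_biSup {ι : Type*} [FiniteDimensional ℝ V]
    (μ : LinearMap.BilinForm ℝ V)
    (hsymm : ∀ x y : V, μ x y = μ y x) (hpos : ∀ x : V, x ≠ 0 → 0 < μ x x)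
    {Wfam : ι → ℤ → Submodule ℝ V} (hfil : ∀ i, IsIncFiltration (Wfam i))
    {D : (ι → ℤ) → Submodule ℝ V}
    (hs : ∀ i k, orthSplit μ (Wfam i) k = ⨆ w ∈ {w : ι → ℤ | w i = k}, D w)
    (i : ι) (k : ℤ) : Wfam i k = ⨆ w ∈ {w : ι → ℤ | w i ≤ k}, D w := by
  obtain ⟨hmono, ⟨a, ha⟩, -⟩ := hfil i
  have hDle : ∀ w : ι → ℤ, D w ≤ orthSplit μ (Wfam i) (w i) := by
    intro w
    rw [hs i (w i)]
    exact le_iSup_of_le w (le_iSup_of_le rfl le_rfl)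
  apply le_antisymm
  · have key : ∀ k : ℤ, a ≤ k → Wfam i k ≤ ⨆ w ∈ {w : ι → ℤ | w i ≤ k}, D w := by
      refine Int.le_induction ?_ ?_
      · rw [ha a le_rfl]; exact bot_le
      · intro k hk ih
        refine le_trans (filt_step μ hsymm hpos hmono (k+1)) (sup_le ?_ ?_)
        · simp only [add_sub_cancel_right]
          refine le_trans ih (iSup₂_le fun w hw => le_iSup₂_of_le w ?_ le_rfl)
          simp only [Set.mem_setOf_eq] at hw ⊢; omega
        · rw [hs i (k+1)]
          refine iSup₂_le fun w hw => le_iSup₂_of_le w ?_ le_rfl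
          simp only [Set.mem_setOf_eq] at hw ⊢; omega
    rcases le_total k a with h | h
    · rw [ha k h]; exact bot_le
    · exact key k h
  · refine iSup₂_le fun w hw => ?_
    exact le_trans (hDle w) (le_trans inf_le_left (hmono hw))

lemma block_orth {ι : Type*} (μ : LinearMap.BilinForm ℝ V)
    (hsymm : ∀ x y : V, μ x y = μ y x)
    {Wfam : ι → ℤ → Submodule ℝ V} (hmono : ∀ i, Monotone (Wfam i))
    {D : (ι → ℤ) → Submodule ℝ V}
    (hs : ∀ i k, orthSplit μ (Wfam i) k = ⨆ w ∈ {w : ι → ℤ | w i = k}, D w)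
    {w w' : ι → ℤ} (hne : w ≠ w') {x y : V} (hx : x ∈ D w) (hy : y ∈ D w') :
    μ x y = 0 := by
  have hDle : ∀ (w : ι → ℤ) (i : ι), D w ≤ orthSplit μ (Wfam i) (w i) := by
    intro w i
    rw [hs i (w i)]
    exact le_iSup_of_le w (le_iSup_of_le rfl le_rfl)
  have key : ∀ (w w' : ι → ℤ) (i : ι), w' i < w i →
      ∀ x ∈ D w, ∀ y ∈ D w', μ y x = 0 := by
    intro w w' i hlt x hx y hy
    have hxO : x ∈ μ.orthogonal (Wfam i (w i - 1)) := (hDle w i hx).2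
    have hyW : y ∈ Wfam i (w i - 1) := by
      have h1 : y ∈ Wfam i (w' i) := (hDle w' i hy).1
      exact hmono i (by omega) h1
    exact (LinearMap.BilinForm.mem_orthogonal_iff.mp hxO) y hyW
  obtain ⟨i, hi⟩ := Function.ne_iff.mp hne
  rcases lt_or_gt_of_ne hi with h | h
  · exact key w' w i h y hy x hx
  · rw [hsymm]
    exact key w w' i h x hx y hy

lemma finrank_block [FiniteDimensional ℝ V] {ι : Type*} [DecidableEq ι]
    [DecidableEq (ι → ℤ)]
    {Wfam : ι → ℤ → Submodule ℝ V}
    {D : (ι → ℤ) → Submodule ℝ V} (hI : DirectSum.IsInternal D)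
    (hW : ∀ i k, Wfam i k = ⨆ w' ∈ {w' : ι → ℤ | w' i ≤ k}, D w')
    (w : ι → ℤ) :
    finrank ℝ ↥(⨅ i, Wfam i (w i)) =
      finrank ℝ (D w) +
        finrank ℝ ↥(⨆ i, ⨅ i', Wfam i' (Function.update w i (w i - 1) i')) := by
  set T : Set (ι → ℤ) := {w' | w' ≤ w ∧ w' ≠ w} with hT
  have hU : (⨅ i, Wfam i (w i)) = ⨆ w' ∈ {w' : ι → ℤ | w' ≤ w}, D w' := by
    calc (⨅ i, Wfam i (w i)) = ⨅ i, ⨆ w' ∈ {w' : ι → ℤ | w' i ≤ w i}, D w' := by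
          exact iInf_congr fun i => hW i (w i)
      _ = ⨆ w' ∈ ⋂ i, {w' : ι → ℤ | w' i ≤ w i}, D w' := iInf_biSup_eq hI _
      _ = ⨆ w' ∈ {w' : ι → ℤ | w' ≤ w}, D w' := by
          have hset : (⋂ i, {w' : ι → ℤ | w' i ≤ w i}) = {w' : ι → ℤ | w' ≤ w} := by
            ext w'
            simp [Set.mem_iInter, Pi.le_def]
          rw [hset]
  have hX : (⨆ i, ⨅ i', Wfam i' (Function.update w i (w i - 1) i')) =
      ⨆ w' ∈ T, D w' := by
    have hXi : ∀ i, (⨅ i', Wfam i' (Function.update w i (w i - 1) i')) =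
        ⨆ w' ∈ {w' : ι → ℤ | w' ≤ Function.update w i (w i - 1)}, D w' := by
      intro i
      calc (⨅ i', Wfam i' (Function.update w i (w i - 1) i'))
          = ⨅ i', ⨆ w' ∈ {w' : ι → ℤ | w' i' ≤ Function.update w i (w i - 1) i'}, D w' :=
            iInf_congr fun i' => hW i' _
        _ = ⨆ w' ∈ ⋂ i', {w' : ι → ℤ | w' i' ≤ Function.update w i (w i - 1) i'}, D w' :=
            iInf_biSup_eq hI _
        _ = _ := by
            have hset : (⋂ i', {w' : ι → ℤ | w' i' ≤ Function.update w i (w i - 1) i'})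
                = {w' : ι → ℤ | w' ≤ Function.update w i (w i - 1)} := by
              ext w'
              simp [Set.mem_iInter, Pi.le_def]
            rw [hset]
    calc (⨆ i, ⨅ i', Wfam i' (Function.update w i (w i - 1) i'))
        = ⨆ i, ⨆ w' ∈ {w' : ι → ℤ | w' ≤ Function.update w i (w i - 1)}, D w' :=
          iSup_congr hXi
      _ = ⨆ w' ∈ ⋃ i, {w' : ι → ℤ | w' ≤ Function.update w i (w i - 1)}, D w' :=
          (iSup_iUnion _ _).symm
      _ = ⨆ w' ∈ T, D w' := by
          have hset : (⋃ i, {w' : ι → ℤ | w' ≤ Function.update w i (w i - 1)}) = T := by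
            ext w'
            simp only [Set.mem_iUnion, Set.mem_setOf_eq, hT, Pi.le_def]
            constructor
            · rintro ⟨i, hi⟩
              constructor
              · intro j
                have := hi j
                rcases eq_or_ne j i with rfl | hji
                · rw [Function.update_self] at this; omega
                · rwa [Function.update_of_ne hji] at this
              · intro hc
                have := hi i
                rw [Function.update_self, hc] at this
                omega
            · rintro ⟨hle, hne⟩
              obtain ⟨i, hi⟩ := Function.ne_iff.mp hne
              refine ⟨i, fun j => ?_⟩
              rcases eq_or_ne j i with rfl | hji
              · rw [Function.update_self]
                have := hle j
                omega
              · rw [Function.update_of_ne hji]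
                exact hle j
          rw [hset]
  have hsplit : (⨆ w' ∈ {w' : ι → ℤ | w' ≤ w}, D w') = D w ⊔ ⨆ w' ∈ T, D w' := by
    have : {w' : ι → ℤ | w' ≤ w} = insert w T := by
      ext w'
      simp only [Set.mem_setOf_eq, Set.mem_insert_iff, hT]
      constructor
      · intro h
        rcases eq_or_ne w' w with rfl | hne
        · exact Or.inl rfl
        · exact Or.inr ⟨h, hne⟩
      · rintro (rfl | ⟨h, -⟩)
        · exact le_rfl
        · exact h
    rw [this, iSup_insert]
  have hdisj : Disjoint (D w) (⨆ w' ∈ T, D w') := by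
    refine Disjoint.mono_right ?_ (hI.submodule_iSupIndep w)
    refine iSup₂_le fun w' hw' => ?_
    exact le_iSup_of_le w' (le_iSup_of_le hw'.2 le_rfl)
  rw [hU, hX, hsplit]
  have := Submodule.finrank_sup_add_finrank_inf_eq (D w) (⨆ w' ∈ T, D w')
  rw [hdisj.eq_bot, finrank_bot, add_zero] at this
  rw [this]

/-- orthonormal basis for a positive definite symmetric bilinear form -/
lemma exists_onb {M : Type*} [AddCommGroup M] [Module ℝ M] [FiniteDimensional ℝ M]
    (B : LinearMap.BilinForm ℝ M) (hsymm : ∀ x y : M, B x y = B y x)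
    (hpos : ∀ x : M, x ≠ 0 → 0 < B x x) :
    ∃ v : Basis (Fin (finrank ℝ M)) ℝ M, ∀ i j, B (v i) (v j) = if i = j then 1 else 0 := by
  have hBsymm : B.IsSymm := ⟨fun x y => by simpa using hsymm x y⟩
  obtain ⟨v, hv⟩ := LinearMap.BilinForm.exists_orthogonal_basis (LinearMap.BilinForm.isSymm_iff.mp hBsymm)
  have hvpos : ∀ i, 0 < B (v i) (v i) := fun i => hpos _ (v.ne_zero i)
  set c : Fin (finrank ℝ M) → ℝˣ :=
    fun i => Units.mk0 (Real.sqrt (B (v i) (v i)))⁻¹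
      (inv_ne_zero (Real.sqrt_pos.mpr (hvpos i)).ne') with hc
  refine ⟨v.unitsSMul c, fun i j => ?_⟩
  rw [Basis.unitsSMul_apply, Basis.unitsSMul_apply]
  have hsmul : ∀ (a b : ℝ) (x y : M), B (a • x) (b • y) = a * b * B x y := by
    intro a b x y
    simp only [map_smul, LinearMap.map_smul₂, smul_eq_mul, LinearMap.smul_apply]
    ring
  rcases eq_or_ne i j with rfl | hne
  · simp only [if_pos rfl, ↓reduceIte]
    simp only [Units.smul_def]
    rw [hsmul]
    have h0 : (0:ℝ) < B (v i) (v i) := hvpos i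
    rw [hc]
    simp only [Units.val_mk0]
    rw [← mul_inv, Real.mul_self_sqrt h0.le]
    field_simp
  · simp only [Units.smul_def]
    rw [if_neg hne, hsmul, hv hne, mul_zero]

end auxLemmas

/-- If two inner products `μ₁`, `μ₂` on a finite-dimensional real vector space both give
compatible orthogonal splittings of a finite set `Φ` of increasing filtrations, then
`μ₂ = g μ₁` for some automorphism `g` preserving all filtrations in `Φ`. -/
theorem exists_automorphism_transporting_inner_product
    {V : Type*} [AddCommGroup V] [Module ℝ V] [FiniteDimensional ℝ V]
    (μ₁ μ₂ : LinearMap.BilinForm ℝ V)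
    (hμ₁symm : ∀ x y : V, μ₁ x y = μ₁ y x) (hμ₁pos : ∀ x : V, x ≠ 0 → 0 < μ₁ x x)
    (hμ₂symm : ∀ x y : V, μ₂ x y = μ₂ y x) (hμ₂pos : ∀ x : V, x ≠ 0 → 0 < μ₂ x x)
    (Φ : Set (ℤ → Submodule ℝ V)) (hΦfin : Φ.Finite)
    (hΦfil : ∀ W ∈ Φ, IsIncFiltration W)
    (h₁ : CompatibleFamily (fun W : Φ => orthSplit μ₁ W.1))
    (h₂ : CompatibleFamily (fun W : Φ => orthSplit μ₂ W.1)) :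
    ∃ g : V ≃ₗ[ℝ] V,
      (∀ W ∈ Φ, ∀ k : ℤ, Submodule.map (g : V →ₗ[ℝ] V) (W k) = W k) ∧
      ∀ x y : V, μ₂ x y = μ₁ (g.symm x) (g.symm y) := by
  classical
  obtain ⟨D₁, hD₁ind, hD₁sup, -, hD₁s⟩ := h₁
  obtain ⟨D₂, hD₂ind, hD₂sup, -, hD₂s⟩ := h₂
  have hI₁ : DirectSum.IsInternal D₁ :=
    DirectSum.isInternal_submodule_of_iSupIndep_of_iSup_eq_top hD₁ind hD₁sup
  have hI₂ : DirectSum.IsInternal D₂ :=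
    DirectSum.isInternal_submodule_of_iSupIndep_of_iSup_eq_top hD₂ind hD₂sup
  have hfil : ∀ i : Φ, IsIncFiltration i.1 := fun i => hΦfil i.1 i.2
  have hmono : ∀ i : Φ, Monotone (i.1 : ℤ → Submodule ℝ V) := fun i => (hfil i).1
  have hW₁ : ∀ (i : Φ) (k : ℤ), i.1 k = ⨆ w ∈ {w : Φ → ℤ | w i ≤ k}, D₁ w :=
    fun i k => filt_eq_biSup μ₁ hμ₁symm hμ₁pos hfil hD₁s i k
  have hW₂ : ∀ (i : Φ) (k : ℤ), i.1 k = ⨆ w ∈ {w : Φ → ℤ | w i ≤ k}, D₂ w :=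
    fun i k => filt_eq_biSup μ₂ hμ₂symm hμ₂pos hfil hD₂s i k
  -- equality of block dimensions
  have key : ∀ w : Φ → ℤ, finrank ℝ (D₁ w) = finrank ℝ (D₂ w) := by
    intro w
    have e1 := finrank_block (Wfam := fun i : Φ => (i.1 : ℤ → Submodule ℝ V)) hI₁ hW₁ w
    have e2 := finrank_block (Wfam := fun i : Φ => (i.1 : ℤ → Submodule ℝ V)) hI₂ hW₂ w
    omega
  -- orthonormal bases of the blocks
  have hres₁ : ∀ w : Φ → ℤ, ∃ v : Basis (Fin (finrank ℝ (D₁ w))) ℝ (D₁ w),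
      ∀ a b, (μ₁.restrict (D₁ w)) (v a) (v b) = if a = b then 1 else 0 := by
    intro w
    refine exists_onb (μ₁.restrict (D₁ w)) (fun x y => ?_) (fun x hx => ?_)
    · simpa using hμ₁symm x y
    · have h0 : (x : V) ≠ 0 := fun h => hx (Subtype.ext h)
      simpa using hμ₁pos x h0
  have hres₂ : ∀ w : Φ → ℤ, ∃ v : Basis (Fin (finrank ℝ (D₂ w))) ℝ (D₂ w),
      ∀ a b, (μ₂.restrict (D₂ w)) (v a) (v b) = if a = b then 1 else 0 := by
    intro w
    refine exists_onb (μ₂.restrict (D₂ w)) (fun x y => ?_) (fun x hx => ?_)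
    · simpa using hμ₂symm x y
    · have h0 : (x : V) ≠ 0 := fun h => hx (Subtype.ext h)
      simpa using hμ₂pos x h0
  choose v₁ hv₁ using hres₁
  choose v₂ hv₂ using hres₂
  set b₁ : Basis (Σ w : Φ → ℤ, Fin (finrank ℝ (D₁ w))) ℝ V := hI₁.collectedBasis v₁ with hb₁def
  set b₂ : Basis (Σ w : Φ → ℤ, Fin (finrank ℝ (D₂ w))) ℝ V := hI₂.collectedBasis v₂ with hb₂def
  set e : (Σ w : Φ → ℤ, Fin (finrank ℝ (D₁ w))) ≃ (Σ w : Φ → ℤ, Fin (finrank ℝ (D₂ w))) :=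
    Equiv.sigmaCongrRight (fun w => finCongr (key w)) with he
  set g : V ≃ₗ[ℝ] V := b₁.equiv b₂ e with hg
  -- global orthonormality
  have hortho₁ : ∀ p q, μ₁ (b₁ p) (b₁ q) = if p = q then 1 else 0 := by
    rintro ⟨w, a⟩ ⟨w', a'⟩
    rcases eq_or_ne w w' with rfl | hne
    · have hcoe : ∀ (c : Fin (finrank ℝ (D₁ w))), b₁ ⟨w, c⟩ = (v₁ w c : V) := by
        intro c; rw [hb₁def, hI₁.collectedBasis_coe]
      rw [hcoe a, hcoe a']
      have hres : μ₁ (v₁ w a : V) (v₁ w a' : V) = if a = a' then 1 else 0 := hv₁ w a a'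
      rw [hres]
      rcases eq_or_ne a a' with rfl | hne'
      · simp
      · rw [if_neg hne', if_neg (by simp [hne'])]
    · rw [if_neg (by simp [hne])]
      exact block_orth μ₁ hμ₁symm hmono hD₁s hne
        (hI₁.collectedBasis_mem v₁ ⟨w, a⟩) (hI₁.collectedBasis_mem v₁ ⟨w', a'⟩)
  have hortho₂ : ∀ p q, μ₂ (b₂ p) (b₂ q) = if p = q then 1 else 0 := by
    rintro ⟨w, a⟩ ⟨w', a'⟩
    rcases eq_or_ne w w' with rfl | hne
    · have hcoe : ∀ (c : Fin (finrank ℝ (D₂ w))), b₂ ⟨w, c⟩ = (v₂ w c : V) := by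
        intro c; rw [hb₂def, hI₂.collectedBasis_coe]
      rw [hcoe a, hcoe a']
      have hres : μ₂ (v₂ w a : V) (v₂ w a' : V) = if a = a' then 1 else 0 := hv₂ w a a'
      rw [hres]
      rcases eq_or_ne a a' with rfl | hne'
      · simp
      · rw [if_neg hne', if_neg (by simp [hne'])]
    · rw [if_neg (by simp [hne])]
      exact block_orth μ₂ hμ₂symm hmono hD₂s hne
        (hI₂.collectedBasis_mem v₂ ⟨w, a⟩) (hI₂.collectedBasis_mem v₂ ⟨w', a'⟩)
  -- g intertwines the forms
  have hgb : ∀ p, g (b₁ p) = b₂ (e p) := fun p => by rw [hg, Basis.equiv_apply]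
  have hint : ∀ x y : V, μ₂ (g x) (g y) = μ₁ x y := by
    have hform : (μ₂.compl₁₂ (g : V →ₗ[ℝ] V) (g : V →ₗ[ℝ] V)) = μ₁ := by
      apply LinearMap.ext_basis b₁ b₁
      intro p q
      simp only [LinearMap.compl₁₂_apply, LinearMap.coe_coe]
      rw [show ((g : V →ₗ[ℝ] V) (b₁ p)) = g (b₁ p) from rfl,
        show ((g : V →ₗ[ℝ] V) (b₁ q)) = g (b₁ q) from rfl, hgb p, hgb q,
        hortho₂ (e p) (e q), hortho₁ p q]
      simp only [EmbeddingLike.apply_eq_iff_eq]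
    intro x y
    have := LinearMap.congr_fun₂ hform x y
    simpa using this
  -- g maps blocks to blocks
  have hspan : ∀ w : Φ → ℤ, D₁ w = Submodule.span ℝ (Set.range fun a => ((v₁ w a : V))) := by
    intro w
    conv_lhs => rw [← Submodule.map_subtype_top (D₁ w)]
    rw [← (v₁ w).span_eq, Submodule.map_span]
    congr 1
    rw [← Set.range_comp]
    rfl
  have hspan₂ : ∀ w : Φ → ℤ, D₂ w = Submodule.span ℝ (Set.range fun a => ((v₂ w a : V))) := by
    intro w
    conv_lhs => rw [← Submodule.map_subtype_top (D₂ w)]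
    rw [← (v₂ w).span_eq, Submodule.map_span]
    congr 1
    rw [← Set.range_comp]
    rfl
  have hmap : ∀ w : Φ → ℤ, Submodule.map (g : V →ₗ[ℝ] V) (D₁ w) = D₂ w := by
    intro w
    rw [hspan w, Submodule.map_span, hspan₂ w]
    congr 1
    rw [← Set.range_comp]
    have hfun : ((g : V →ₗ[ℝ] V) ∘ fun a => ((v₁ w a : V)))
        = (fun a => ((v₂ w a : V))) ∘ (finCongr (key w)) := by
      funext a
      have h1 : ((v₁ w a : V)) = b₁ ⟨w, a⟩ := by rw [hb₁def, hI₁.collectedBasis_coe]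
      have h2 : b₂ ⟨w, finCongr (key w) a⟩ = (v₂ w (finCongr (key w) a) : V) := by
        rw [hb₂def, hI₂.collectedBasis_coe]
      simp only [Function.comp_apply]
      rw [show ((g : V →ₗ[ℝ] V) ((v₁ w a : V))) = g ((v₁ w a : V)) from rfl, h1, hgb ⟨w, a⟩]
      rw [he]
      exact h2
    rw [hfun, Set.range_comp, (finCongr (key w)).surjective.range_eq, Set.image_univ]
  refine ⟨g, ?_, ?_⟩
  · intro W hW k
    have h1 : W k = ⨆ w ∈ {w : Φ → ℤ | w ⟨W, hW⟩ ≤ k}, D₁ w := hW₁ ⟨W, hW⟩ k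
    have h2 : W k = ⨆ w ∈ {w : Φ → ℤ | w ⟨W, hW⟩ ≤ k}, D₂ w := hW₂ ⟨W, hW⟩ k
    conv_lhs => rw [h1]
    simp only [Submodule.map_iSup]
    exact (iSup_congr fun w => iSup_congr fun _ => hmap w).trans h2.symm
  · intro x y
    have := hint (g.symm x) (g.symm y)
    rw [g.apply_symm_apply, g.apply_symm_apply] at this
    exact this
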